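/- Let b > 1 and c be positive integers with gcd(b,c) = 1 and 2 ≤ c < 2b, and let n ≥ 1. Then the set A'_n := {x ∈ [1,n] : b ∤ x} contains no solutions to b·(x+y) = c·z with x,y,z ∈ A'_n, and every subset B of {1,...,n} avoiding b(x+y)=cz satisfies |B| ≤ |A'_n| = n − ⌊n/b⌋. -/

import Mathlib

private lemma arith_key (b m n q s M : ℕ) (hb : 2 ≤ b) (hm1 : 1 ≤ m)
    (hbm : b*m ≤ n) (hnub : n < b*m + b) (hsub : s + m ≤ 2*(b*m)) (hns : n + 2 ≤ s)
    (hq : b*q ≤ s - n - 1) (hq2 : s - n - 1 < b*q + b)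
    (hM : M = (s-1)/2) : m + M ≤ n + q := by
  rcases Nat.lt_or_ge b 3 with hb2 | hb3
  · have hb2' : b = 2 := by omega
    subst hb2'
    omega
  · rcases Nat.lt_or_ge m 3 with hm2 | hm3
    · interval_cases m <;> omega
    · have hM1 : 2*M + 1 ≤ s := by omega
      have hM2 : s ≤ 2*M + 2 := by omega
      have hq' : b*q + (s - n - 1 - b*q) + n + 1 = s := by omega
      set r := s - n - 1 - b*q with hr
      have hrb : r < b := by omega
      clear_value r
      clear hq hq2 hM hnub hr hM2
      zify at *
      nlinarith [mul_nonneg (by linarith : (0:ℤ) ≤ 2*(b:ℤ) - 2) (by linarith : (0:ℤ) ≤ (n:ℤ) - b*m),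
             mul_nonneg (by linarith : (0:ℤ) ≤ (b:ℤ) - 2) (by linarith : (0:ℤ) ≤ 2*(b:ℤ)*m - m - s),
             mul_nonneg (by linarith : (0:ℤ) ≤ (b:ℤ) - 2) (by linarith : (0:ℤ) ≤ (m:ℤ) - 3),
             mul_nonneg (by linarith : (0:ℤ) ≤ (b:ℤ)) (by linarith : (0:ℤ) ≤ (s:ℤ) - 1 - 2*M)]

private lemma avoid_card_bound (b c : ℕ) (hb : 2 ≤ b) (hc2 : 2 ≤ c) (hcb : c < 2*b) :
    ∀ n : ℕ, ∀ B : Finset ℕ, B ⊆ Finset.Icc 1 n →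
      (¬ ∃ x ∈ B, ∃ y ∈ B, ∃ z ∈ B, b * (x + y) = c * z) → B.card ≤ n - n / b := by
  intro n
  induction n using Nat.strong_induction_on with
  | _ n IH =>
    intro B hB hav
    obtain ⟨m, hmn⟩ : ∃ m, n / b = m := ⟨_, rfl⟩
    rw [hmn]
    have hbm : b * m ≤ n := by
      rw [← hmn, mul_comm]; exact Nat.div_mul_le_self n b
    have hnub : n < b * m + b := by
      have h1 := Nat.div_add_mod n b
      rw [hmn] at h1
      have h2 : n % b < b := Nat.mod_lt n (by omega)
      omega
    have hmemn : ∀ x ∈ B, 1 ≤ x ∧ x ≤ n := by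
      intro x hx
      have := hB hx
      simpa [Finset.mem_Icc] using this
    rcases Nat.eq_zero_or_pos m with hm0 | hm1
    · have : B.card ≤ (Finset.Icc 1 n).card := Finset.card_le_card hB
      rw [Nat.card_Icc] at this
      omega
    by_cases hzB : b * m ∈ B
    · -- top multiple present
      set s := c * m with hsdef
      have hs2m : 2 * m ≤ s := Nat.mul_le_mul_right m hc2
      have hsub : s + m ≤ 2 * (b * m) := by
        have h : c * m + 1 * m ≤ (2*b) * m := by
          rw [← Nat.add_mul]
          exact Nat.mul_le_mul_right m (by omega)
        calc s + m = c*m + 1*m := by rw [hsdef]; ring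
        _ ≤ (2*b)*m := h
        _ = 2*(b*m) := by ring
      have pair : ∀ x ∈ B, ∀ y ∈ B, x + y ≠ s := by
        intro x hx y hy hxy
        exact hav ⟨x, hx, y, hy, b*m, hzB, by rw [hxy, hsdef]; ring⟩
      have fmain : ∀ (S : Finset ℕ) (lo : ℕ), S ⊆ B → (∀ x ∈ S, lo ≤ min x (s - x) ∧ x < s) →
          S.card ≤ (Finset.Icc lo ((s-1)/2)).card := by
        intro S lo hSB hrange
        apply Finset.card_le_card_of_injOn (fun x => min x (s - x))
        · intro x hx
          have h1 := (hrange x hx).1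
          have h2 := (hrange x hx).2
          have hxB := hSB hx
          have hmin1 : min x (s-x) ≤ x := Nat.min_le_left _ _
          have hmin2 : min x (s-x) ≤ s - x := Nat.min_le_right _ _
          have h2f : 2 * min x (s - x) ≠ s := by
            intro heq
            have hxx : x + x = s := by omega
            exact pair x hxB x hxB hxx
          show min x (s - x) ∈ Finset.Icc lo ((s-1)/2)
          exact Finset.mem_Icc.mpr ⟨h1, by omega⟩
        · intro x hx y hy hfxy
          simp only at hfxy
          by_contra hne
          have hxB := hSB hx
          have hyB := hSB hy
          have hxs := (hrange x hx).2
          have hys := (hrange y hy).2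
          have hxy : x + y = s := by
            rcases min_cases x (s-x) with ⟨e1, _⟩ | ⟨e1, _⟩ <;>
            rcases min_cases y (s-y) with ⟨e2, _⟩ | ⟨e2, _⟩ <;> omega
          exact pair x hxB y hyB hxy
      by_cases hcmn : s ≤ n + 1
      · -- case 2: window reaches bottom
        have hsplit : (B.filter (fun x => x < s)).card
            + (B.filter (fun x => ¬ x < s)).card = B.card :=
          Finset.card_filter_add_card_filter_not (p := fun x => x < s)
        have hS1 : (B.filter (fun x => x < s)).card ≤ (Finset.Icc 1 ((s-1)/2)).card := by
          apply fmain _ 1 (Finset.filter_subset _ _)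
          intro x hx
          simp only [Finset.mem_filter] at hx
          have h1 := (hmemn x hx.1).1
          have h2 := hx.2
          exact ⟨by omega, h2⟩
        have hS2 : (B.filter (fun x => ¬ x < s)).card ≤ (Finset.Icc s n).card := by
          apply Finset.card_le_card
          intro x hx
          simp only [Finset.mem_filter] at hx
          have := hmemn x hx.1
          simp only [Finset.mem_Icc]
          omega
        rw [Nat.card_Icc] at hS1 hS2
        omega
      · -- case 3: window truncated, use induction on low part
        set l := s - n - 1 with hldef
        have hl1 : 1 ≤ l := by omega
        have hln : l < n := by omega
        have hsplit : (B.filter (fun x => x ≤ l)).card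
            + (B.filter (fun x => ¬ x ≤ l)).card = B.card :=
          Finset.card_filter_add_card_filter_not (p := fun x => x ≤ l)
        obtain ⟨q, hqn⟩ : ∃ q, l / b = q := ⟨_, rfl⟩
        have hS1 : (B.filter (fun x => x ≤ l)).card ≤ l - q := by
          rw [← hqn]
          apply IH l hln
          · intro x hx
            simp only [Finset.mem_filter] at hx
            have := (hmemn x hx.1).1
            simp only [Finset.mem_Icc]
            exact ⟨this, hx.2⟩
          · rintro ⟨x, hx, y, hy, z, hz, heq⟩
            simp only [Finset.mem_filter] at hx hy hz
            exact hav ⟨x, hx.1, y, hy.1, z, hz.1, heq⟩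
        have hS2 : (B.filter (fun x => ¬ x ≤ l)).card ≤ (Finset.Icc (l+1) ((s-1)/2)).card := by
          apply fmain _ (l+1) (Finset.filter_subset _ _)
          intro x hx
          simp only [Finset.mem_filter] at hx
          have h1 := hmemn x hx.1
          have h2 := hx.2
          constructor
          · have ha : l + 1 ≤ x := by omega
            have hb' : l + 1 ≤ s - x := by omega
            omega
          · omega
        rw [Nat.card_Icc] at hS2
        have hq1 : b * q ≤ l := by
          rw [← hqn, mul_comm]; exact Nat.div_mul_le_self l b
        have hq2 : l < b * q + b := by
          have h1 := Nat.div_add_mod l b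
          rw [hqn] at h1
          have h2 : l % b < b := Nat.mod_lt l (by omega)
          omega
        have hkey : m + (s-1)/2 ≤ n + q := by
          apply arith_key b m n q s ((s-1)/2) hb hm1 hbm hnub hsub (by omega)
          · rw [← hldef]; exact hq1
          · rw [← hldef]; exact hq2
          · rfl
        omega
    · -- top multiple absent: induction on n' = b*m - 1
      obtain ⟨k, hk⟩ : ∃ k, m = k + 1 := ⟨m - 1, by omega⟩
      subst hk
      have hbk : b * (k+1) = b*k + b := by ring
      have hkb : k * b = b * k := Nat.mul_comm k b
      have hn' : b*(k+1) - 1 < n := by omega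
      have hdiv : (b*(k+1) - 1) / b = k := by
        apply Nat.div_eq_of_lt_le
        · omega
        · have h2 : (k+1) * b = b * (k+1) := Nat.mul_comm (k+1) b
          omega
      have hS1 : (B.filter (fun x => x ≤ b*(k+1) - 1)).card ≤ (b*(k+1) - 1) - k := by
        have := IH (b*(k+1) - 1) hn' (B.filter (fun x => x ≤ b*(k+1) - 1)) ?_ ?_
        · rw [hdiv] at this; exact this
        · intro x hx
          simp only [Finset.mem_filter] at hx
          have := (hmemn x hx.1).1
          simp only [Finset.mem_Icc]
          exact ⟨this, hx.2⟩
        · rintro ⟨x, hx, y, hy, z, hz, heq⟩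
          simp only [Finset.mem_filter] at hx hy hz
          exact hav ⟨x, hx.1, y, hy.1, z, hz.1, heq⟩
      have hsplit : (B.filter (fun x => x ≤ b*(k+1) - 1)).card
          + (B.filter (fun x => ¬ x ≤ b*(k+1) - 1)).card = B.card :=
        Finset.card_filter_add_card_filter_not (p := fun x => x ≤ b*(k+1) - 1)
      have hS2 : (B.filter (fun x => ¬ x ≤ b*(k+1) - 1)).card ≤ (Finset.Icc (b*(k+1)+1) n).card := by
        apply Finset.card_le_card
        intro x hx
        simp only [Finset.mem_filter] at hx
        have h1 := hmemn x hx.1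
        have hxne : x ≠ b*(k+1) := by
          intro h; rw [h] at hx; exact hzB hx.1
        simp only [Finset.mem_Icc]
        omega
      rw [Nat.card_Icc] at hS2
      have hmP : k + 1 ≤ b*(k+1) := Nat.le_mul_of_pos_left (k+1) (by omega)
      obtain ⟨P, hP⟩ : ∃ P, b*(k+1) = P := ⟨_, rfl⟩
      rw [hP] at hbm hS1 hsplit hS2 hmP
      omega

theorem stmt_11 (b c n : ℕ) (hb : 1 < b) (hcop : Nat.Coprime b c)
    (hc1 : 2 ≤ c) (hc2 : c < 2 * b) (hn : 1 ≤ n)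
    (A : Finset ℕ) (hA : A = (Finset.Icc 1 n).filter (fun x => ¬ b ∣ x)) :
    (¬ ∃ x ∈ A, ∃ y ∈ A, ∃ z ∈ A, b * (x + y) = c * z) ∧
    (∀ B : Finset ℕ, B ⊆ Finset.Icc 1 n →
      (¬ ∃ x ∈ B, ∃ y ∈ B, ∃ z ∈ B, b * (x + y) = c * z) →
      B.card ≤ A.card) ∧
    A.card = n - n / b := by
  have hAcard : A.card = n - n / b := by
    subst hA
    have hIcc : Finset.Icc 1 n = Finset.Ioc 0 n := by
      ext x; simp [Finset.mem_Icc, Finset.mem_Ioc]; omega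
    have hdvd : ((Finset.Ioc 0 n).filter (fun x => b ∣ x)).card = n / b :=
      Nat.Ioc_filter_dvd_card_eq_div n b
    have hsplit : ((Finset.Icc 1 n).filter (fun x => b ∣ x)).card
        + ((Finset.Icc 1 n).filter (fun x => ¬ b ∣ x)).card = (Finset.Icc 1 n).card :=
      Finset.card_filter_add_card_filter_not (p := fun x => b ∣ x)
    rw [hIcc] at hsplit
    have hcardIoc : (Finset.Ioc 0 n).card = n := by simp
    have hdle : n / b ≤ n := Nat.div_le_self n b
    rw [hIcc]
    omega
  refine ⟨?_, ?_, hAcard⟩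
  · rintro ⟨x, hx, y, hy, z, hz, heq⟩
    subst hA
    simp only [Finset.mem_filter] at hz
    have hbdvd : b ∣ z * c := ⟨x + y, by rw [mul_comm z c]; exact heq.symm⟩
    exact hz.2 (hcop.dvd_of_dvd_mul_right hbdvd)
  · intro B hBsub hBav
    rw [hAcard]
    exact avoid_card_bound b c hb hc1 hc2 n B hBsub hBav
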